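/- Fix β ∈ C^N and k ∈ Z^N with k+β ≠ 0. The map sending v_1∧...∧v_p ⊗ t^k to Σ_{i=1}^p (-1)^i (\overline{k+β} | v_i) v_1∧...∧v̂_i∧...∧v_p ⊗ t^k extends to a well-defined linear map T_p^β on Λ^p C^N ⊗ C[t_1^{±1},...,t_N^{±1}] which commutes with the action of every operator h_r of the Hamiltonian Lie algebra H_N, where h_r acts on v⊗t^k by (r̄|k+β) v⊗t^{k+r} + (r r̄^T)v ⊗ t^{k+r}. -/

import Mathlib

open Matrix

section Aux

variable {M : Type*} [AddCommGroup M] [Module ℂ M]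

local notation "E" => ExteriorAlgebra ℂ M

/-- contraction as operator -/
noncomputable abbrev ctr (d : Module.Dual ℂ M) : E →ₗ[ℂ] E :=
  CliffordAlgebra.contractLeft d

lemma ctr_ι_mul (d : Module.Dual ℂ M) (u : M) (x : E) :
    ctr d (ExteriorAlgebra.ι ℂ u * x) = d u • x - ExteriorAlgebra.ι ℂ u * ctr d x :=
  CliffordAlgebra.contractLeft_ι_mul (Q := (0 : QuadraticForm ℂ M)) (d := d) u x

lemma ctr_ι (d : Module.Dual ℂ M) (u : M) :
    ctr d (ExteriorAlgebra.ι ℂ u) = algebraMap ℂ E (d u) :=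
  CliffordAlgebra.contractLeft_ι (0 : QuadraticForm ℂ M) d u

lemma ctr_algebraMap (d : Module.Dual ℂ M) (c : ℂ) :
    ctr d (algebraMap ℂ E c) = 0 :=
  CliffordAlgebra.contractLeft_algebraMap (0 : QuadraticForm ℂ M) d c

lemma ctr_algebraMap_mul (d : Module.Dual ℂ M) (c : ℂ) (b : E) :
    ctr d (algebraMap ℂ E c * b) = algebraMap ℂ E c * ctr d b :=
  CliffordAlgebra.contractLeft_algebraMap_mul (Q := (0 : QuadraticForm ℂ M)) (d := d) c b

lemma ctr_ctr (d : Module.Dual ℂ M) (x : E) : ctr d (ctr d x) = 0 :=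
  CliffordAlgebra.contractLeft_contractLeft (Q := (0 : QuadraticForm ℂ M)) (d := d) x

lemma ctr_comm (d d' : Module.Dual ℂ M) (x : E) :
    ctr d (ctr d' x) = -(ctr d' (ctr d x)) :=
  CliffordAlgebra.contractLeft_comm (Q := (0 : QuadraticForm ℂ M)) (d := d) (d' := d') x

lemma mul_ι_eq (u : M) (a : E) :
    a * ExteriorAlgebra.ι ℂ u = ExteriorAlgebra.ι ℂ u * CliffordAlgebra.involute a := by
  induction a using CliffordAlgebra.induction with
  | algebraMap c => rw [AlgHom.commutes, Algebra.commutes]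
  | ι v =>
      rw [CliffordAlgebra.involute_ι, mul_neg, eq_comm, neg_eq_iff_add_eq_zero,
        ExteriorAlgebra.ι_add_mul_swap]
  | mul a b ha hb => rw [mul_assoc, hb, ← mul_assoc, ha, mul_assoc, ← _root_.map_mul]
  | add a b ha hb => rw [add_mul, ha, hb, _root_.map_add, mul_add]

lemma ctr_mul (d : Module.Dual ℂ M) (a b : E) :
    ctr d (a * b) = ctr d a * b + CliffordAlgebra.involute a * ctr d b := by
  induction a using CliffordAlgebra.induction generalizing b with
  | algebraMap c =>
      rw [ctr_algebraMap_mul, ctr_algebraMap, zero_mul, zero_add, AlgHom.commutes]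
  | ι v =>
      rw [ctr_ι_mul, ctr_ι, CliffordAlgebra.involute_ι, Algebra.smul_def, neg_mul, sub_eq_add_neg]
  | mul a a' ha ha' =>
      rw [mul_assoc, ha, ha', ha a', _root_.map_mul]
      noncomm_ring
  | add a a' ha ha' =>
      simp only [add_mul, ha, ha', _root_.map_add]
      abel

lemma D_eq_mul_ctr (D : E →ₗ[ℂ] E) (rv : M) (ρ : Module.Dual ℂ M)
    (hD1 : ∀ a b : E, D (a * b) = D a * b + a * D b)
    (hD2 : ∀ u : M, D (ExteriorAlgebra.ι ℂ u) = ρ u • ExteriorAlgebra.ι ℂ rv) :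
    ∀ x : E, D x = ExteriorAlgebra.ι ℂ rv * ctr ρ x := by
  have h1 : D 1 = 0 := by
    have := hD1 1 1
    simp only [one_mul, mul_one] at this
    exact (right_eq_add.mp this)
  intro x
  induction x using CliffordAlgebra.induction with
  | algebraMap c =>
      rw [ctr_algebraMap, mul_zero, Algebra.algebraMap_eq_smul_one, LinearMap.map_smul, h1,
        smul_zero]
  | ι u =>
      rw [hD2, ctr_ι, Algebra.smul_def, Algebra.commutes]
  | mul a b ha hb =>
      rw [hD1, ha, hb, ctr_mul, ← mul_assoc a, mul_ι_eq]
      noncomm_ring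
  | add a b ha hb => rw [_root_.map_add, ha, hb, _root_.map_add, mul_add]

lemma ctr_D_eq (D : E →ₗ[ℂ] E) (rv : M) (ρ φ : Module.Dual ℂ M)
    (hD1 : ∀ a b : E, D (a * b) = D a * b + a * D b)
    (hD2 : ∀ u : M, D (ExteriorAlgebra.ι ℂ u) = ρ u • ExteriorAlgebra.ι ℂ rv)
    (x : E) :
    ctr φ (D x) = D (ctr φ x) + φ rv • ctr ρ x := by
  rw [D_eq_mul_ctr D rv ρ hD1 hD2, D_eq_mul_ctr D rv ρ hD1 hD2, ctr_ι_mul,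
    ctr_comm ρ φ, mul_neg]
  abel

lemma ctr_D_zero (D : E →ₗ[ℂ] E) (rv : M) (ρ : Module.Dual ℂ M)
    (hD1 : ∀ a b : E, D (a * b) = D a * b + a * D b)
    (hD2 : ∀ u : M, D (ExteriorAlgebra.ι ℂ u) = ρ u • ExteriorAlgebra.ι ℂ rv)
    (hρ : ρ rv = 0) (x : E) : ctr ρ (D x) = 0 := by
  rw [D_eq_mul_ctr D rv ρ hD1 hD2, ctr_ι_mul, ctr_ctr, mul_zero, hρ, zero_smul, sub_zero]


lemma ctr_list_prod (d : Module.Dual ℂ M) (l : List M) :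
    ctr d ((l.map (ExteriorAlgebra.ι ℂ)).prod)
      = ∑ i : Fin l.length, ((-1 : ℂ) ^ (i : ℕ) * d (l.get i)) •
          ((l.map (ExteriorAlgebra.ι ℂ)).eraseIdx (i : ℕ)).prod := by
  induction l with
  | nil => simp [CliffordAlgebra.contractLeft_one]
  | cons u t ih =>
      rw [List.map_cons, List.prod_cons, ctr_ι_mul, ih]
      simp only [List.length_cons]
      rw [Fin.sum_univ_succ, sub_eq_add_neg]
      congr 1
      · simp
      · rw [Finset.mul_sum, ← Finset.sum_neg_distrib]
        refine Finset.sum_congr rfl fun j _ => ?_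
        rw [mul_smul_comm, ← neg_smul]
        have he : ((ExteriorAlgebra.ι ℂ u :: t.map (ExteriorAlgebra.ι ℂ)).eraseIdx ((j.succ : Fin (t.length + 1)) : ℕ))
            = ExteriorAlgebra.ι ℂ u :: ((t.map (ExteriorAlgebra.ι ℂ)).eraseIdx (j : ℕ)) := rfl
        rw [he, List.prod_cons]
        congr 1
        simp [pow_succ]

lemma ctr_ofFn {p : ℕ} (d : Module.Dual ℂ M) (v : Fin p → M) :
    ctr d (((List.ofFn v).map (ExteriorAlgebra.ι ℂ)).prod)
      = ∑ i : Fin p, ((-1 : ℂ) ^ (i : ℕ) * d (v i)) •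
          (((List.ofFn v).map (ExteriorAlgebra.ι ℂ)).eraseIdx (i : ℕ)).prod := by
  rw [ctr_list_prod]
  refine Fintype.sum_equiv (finCongr (List.length_ofFn (f := v))) _ _ fun i => ?_
  rw [List.get_ofFn]
  rfl

end Aux

section Dvec

variable {ι' : Type*} [Fintype ι'] [DecidableEq ι']

/-- the dual functional `u ↦ a ⬝ᵥ u`. -/
noncomputable def dvec (a : ι' → ℂ) : Module.Dual ℂ (ι' → ℂ) where
  toFun u := a ⬝ᵥ u
  map_add' x y := dotProduct_add a x y
  map_smul' c x := by simp [dotProduct_smul, smul_eq_mul]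

@[simp] lemma dvec_apply (a u : ι' → ℂ) : dvec a u = a ⬝ᵥ u := rfl

lemma dvec_add (a b : ι' → ℂ) : dvec (a + b) = dvec a + dvec b := by
  ext u; simp [add_dotProduct]

end Dvec


/-- The standard symplectic matrix `J` for `N = 2n`. -/
noncomputable def Jmat (n : ℕ) : Matrix (Fin n ⊕ Fin n) (Fin n ⊕ Fin n) ℂ :=
  Matrix.fromBlocks 0 1 (-1) 0

/-- The wedge `v_1 ∧ ... ∧ v_p` inside the exterior algebra. -/
noncomputable def wedge (n : ℕ) {p : ℕ} (v : Fin p → (Fin n ⊕ Fin n → ℂ)) :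
    ExteriorAlgebra ℂ (Fin n ⊕ Fin n → ℂ) :=
  ((List.ofFn v).map (ExteriorAlgebra.ι ℂ)).prod

/-- `Σ_{i=1}^p (-1)^i (overline{k+β} | v_i) v_1 ∧ ... ∧ v̂_i ∧ ... ∧ v_p` (0-based indices). -/
noncomputable def contrKβ (n : ℕ) {p : ℕ} (β : Fin n ⊕ Fin n → ℂ) (k : Fin n ⊕ Fin n → ℤ)
    (v : Fin p → (Fin n ⊕ Fin n → ℂ)) : ExteriorAlgebra ℂ (Fin n ⊕ Fin n → ℂ) :=
  ∑ i : Fin p,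
    ((-1 : ℂ) ^ (i.val + 1) *
        ((Jmat n).mulVec ((fun j => (k j : ℂ)) + β) ⬝ᵥ v i)) •
      (((List.ofFn v).map (ExteriorAlgebra.ι ℂ)).eraseIdx i.val).prod

set_option maxHeartbeats 1000000 in
theorem Tp_well_defined_and_commutes (n p : ℕ) (hp : 1 ≤ p) (β : Fin n ⊕ Fin n → ℂ) :
    ∃ T : ((Fin n ⊕ Fin n → ℤ) →₀ ExteriorAlgebra ℂ (Fin n ⊕ Fin n → ℂ)) →ₗ[ℂ]
        ((Fin n ⊕ Fin n → ℤ) →₀ ExteriorAlgebra ℂ (Fin n ⊕ Fin n → ℂ)),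
      (∀ (k : Fin n ⊕ Fin n → ℤ) (v : Fin p → (Fin n ⊕ Fin n → ℂ)),
        T (Finsupp.single k (wedge n v)) = Finsupp.single k (contrKβ n β k v)) ∧
      (∀ r : Fin n ⊕ Fin n → ℤ,
        ∀ D : ExteriorAlgebra ℂ (Fin n ⊕ Fin n → ℂ) →ₗ[ℂ] ExteriorAlgebra ℂ (Fin n ⊕ Fin n → ℂ),
          (∀ a b, D (a * b) = D a * b + a * D b) →
          (∀ u : Fin n ⊕ Fin n → ℂ, D (ExteriorAlgebra.ι ℂ u) =
            ExteriorAlgebra.ι ℂ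
              ((Matrix.vecMulVec (fun i => (r i : ℂ))
                ((Jmat n).mulVec fun i => (r i : ℂ))).mulVec u)) →
          ∀ Hr : ((Fin n ⊕ Fin n → ℤ) →₀ ExteriorAlgebra ℂ (Fin n ⊕ Fin n → ℂ)) →ₗ[ℂ]
              ((Fin n ⊕ Fin n → ℤ) →₀ ExteriorAlgebra ℂ (Fin n ⊕ Fin n → ℂ)),
            (∀ (k : Fin n ⊕ Fin n → ℤ) (w : ExteriorAlgebra ℂ (Fin n ⊕ Fin n → ℂ)),
              Hr (Finsupp.single k w) =
                ((Jmat n).mulVec (fun i => (r i : ℂ)) ⬝ᵥ ((fun i => (k i : ℂ)) + β)) •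
                  Finsupp.single (k + r) w
                + Finsupp.single (k + r) (D w)) →
            ∀ (k : Fin n ⊕ Fin n → ℤ), ∀ w ∈ ⋀[ℂ]^p (Fin n ⊕ Fin n → ℂ),
              T (Hr (Finsupp.single k w)) = Hr (T (Finsupp.single k w))) := by
  classical
  set J := Jmat n with hJdef
  -- skew-symmetry of J
  have hJT : (Jmat n)ᵀ = -(Jmat n) := by
    ext (i | i) (j | j) <;>
      simp [Jmat, Matrix.fromBlocks, Matrix.transpose_apply, Matrix.one_apply, eq_comm]
  have hskew : ∀ a b : Fin n ⊕ Fin n → ℂ,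
      (Jmat n) *ᵥ a ⬝ᵥ b = -((Jmat n) *ᵥ b ⬝ᵥ a) := by
    intro a b
    have h1 : (Jmat n) *ᵥ a ⬝ᵥ b = b ⬝ᵥ ((Jmat n) *ᵥ a) := dotProduct_comm _ _
    have h2 : b ⬝ᵥ ((Jmat n) *ᵥ a) = (b ᵥ* (Jmat n)) ⬝ᵥ a := Matrix.dotProduct_mulVec b _ a
    have h3 : b ᵥ* (Jmat n) = -((Jmat n) *ᵥ b) := by
      have := Matrix.vecMul_transpose (Jmat n) b
      rw [hJT] at this
      rw [Matrix.vecMul_neg] at this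
      linear_combination (norm := module) -this
    rw [h1, h2, h3, neg_dotProduct]
  have hself : ∀ a : Fin n ⊕ Fin n → ℂ, (Jmat n) *ᵥ a ⬝ᵥ a = 0 := by
    intro a
    have := hskew a a
    have h2 := eq_neg_iff_add_eq_zero.mp this
    have : (2:ℂ) * (Jmat n *ᵥ a ⬝ᵥ a) = 0 := by ring_nf; linear_combination h2
    exact (mul_eq_zero.mp this).resolve_left two_ne_zero
  -- the candidate map
  let φ : (Fin n ⊕ Fin n → ℤ) → Module.Dual ℂ (Fin n ⊕ Fin n → ℂ) :=
    fun k => dvec ((Jmat n) *ᵥ ((fun j => (k j : ℂ)) + β))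
  let S : (Fin n ⊕ Fin n → ℤ) →
      (ExteriorAlgebra ℂ (Fin n ⊕ Fin n → ℂ) →ₗ[ℂ] ExteriorAlgebra ℂ (Fin n ⊕ Fin n → ℂ)) :=
    fun k => -(CliffordAlgebra.contractLeft (φ k))
  refine ⟨Finsupp.lsum ℂ fun k => (Finsupp.lsingle k).comp (S k), ?_, ?_⟩
  · intro k v
    rw [Finsupp.lsum_single, LinearMap.comp_apply, Finsupp.lsingle_apply]
    congr 1
    show -(CliffordAlgebra.contractLeft (φ k) (wedge n v)) = contrKβ n β k v
    rw [wedge]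
    rw [show (CliffordAlgebra.contractLeft (φ k))
          (((List.ofFn v).map (ExteriorAlgebra.ι ℂ)).prod)
        = ∑ i : Fin p, ((-1 : ℂ) ^ (i : ℕ) * (φ k) (v i)) •
            (((List.ofFn v).map (ExteriorAlgebra.ι ℂ)).eraseIdx (i : ℕ)).prod
      from ctr_ofFn (φ k) v]
    rw [contrKβ, ← Finset.sum_neg_distrib]
    refine Finset.sum_congr rfl fun i _ => ?_
    rw [← neg_smul]
    congr 1
    rw [show (φ k) (v i) = (Jmat n) *ᵥ ((fun j => (k j : ℂ)) + β) ⬝ᵥ v i from rfl]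
    ring
  · intro r D hD1 hD2 Hr hHr k w _hw
    have hD2' : ∀ u, D (ExteriorAlgebra.ι ℂ u)
        = dvec ((Jmat n) *ᵥ fun i => (r i : ℂ)) u •
          ExteriorAlgebra.ι ℂ (fun i => (r i : ℂ)) := by
      intro u
      rw [hD2]
      have hm : (Matrix.vecMulVec (fun i => (r i : ℂ)) ((Jmat n) *ᵥ fun i => (r i : ℂ))) *ᵥ u
          = (((Jmat n) *ᵥ fun i => (r i : ℂ)) ⬝ᵥ u) • (fun i => (r i : ℂ)) := by
        funext i
        simp only [Matrix.mulVec, Matrix.vecMulVec_apply, dotProduct, Pi.smul_apply,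
          smul_eq_mul, Finset.mul_sum, Finset.sum_mul]
        exact Finset.sum_congr rfl fun j _ => Finset.sum_congr rfl fun x _ => by ring
      rw [hm, LinearMap.map_smul]
      rfl
    have hρr : dvec ((Jmat n) *ᵥ fun i => (r i : ℂ)) (fun i => (r i : ℂ)) = 0 := hself _
    have hTs : ∀ (m : Fin n ⊕ Fin n → ℤ) (x : ExteriorAlgebra ℂ (Fin n ⊕ Fin n → ℂ)),
        (Finsupp.lsum ℂ fun k => (Finsupp.lsingle k).comp (S k)) (Finsupp.single m x)
          = Finsupp.single m (S m x) := fun m x => by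
      rw [Finsupp.lsum_single, LinearMap.comp_apply, Finsupp.lsingle_apply]
    rw [hHr k w, map_add, LinearMap.map_smul, hTs, hTs, hTs, hHr k (S k w),
      Finsupp.smul_single, Finsupp.smul_single, ← Finsupp.single_add, ← Finsupp.single_add]
    congr 1
    -- now an identity in the exterior algebra
    have hφadd : φ (k + r) = φ k + dvec ((Jmat n) *ᵥ fun i => (r i : ℂ)) := by
      show dvec _ = _
      have hcast : (fun j => (((k + r) j : ℤ) : ℂ))
          = ((fun j => (k j : ℂ)) + β) + (fun i => (r i : ℂ)) - β := by
        funext j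
        simp only [Pi.add_apply, Pi.sub_apply]
        push_cast
        ring
      rw [hcast]
      rw [show ((fun j => (k j : ℂ)) + β) + (fun i => (r i : ℂ)) - β + β
          = ((fun j => (k j : ℂ)) + β) + (fun i => (r i : ℂ)) by abel]
      rw [Matrix.mulVec_add, dvec_add]
    have hz := ctr_D_zero D (fun i => (r i : ℂ)) (dvec ((Jmat n) *ᵥ fun i => (r i : ℂ)))
      hD1 hD2' hρr w
    have he := ctr_D_eq D (fun i => (r i : ℂ)) (dvec ((Jmat n) *ᵥ fun i => (r i : ℂ)))
      (φ k) hD1 hD2' w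
    have hφkr : (φ k) (fun i => (r i : ℂ))
        = -((Jmat n) *ᵥ (fun i => (r i : ℂ)) ⬝ᵥ ((fun i => (k i : ℂ)) + β)) := by
      rw [show (φ k) (fun i => (r i : ℂ))
          = (Jmat n) *ᵥ ((fun j => (k j : ℂ)) + β) ⬝ᵥ (fun i => (r i : ℂ)) from rfl]
      exact hskew _ _
    have hSapp : ∀ (m : Fin n ⊕ Fin n → ℤ) (x : ExteriorAlgebra ℂ (Fin n ⊕ Fin n → ℂ)),
        S m x = -(CliffordAlgebra.contractLeft (φ m) x) := fun m x => rfl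
    rw [hSapp, hSapp, hSapp, LinearMap.map_neg, hφadd, map_add, LinearMap.add_apply,
      LinearMap.add_apply, hz, he, hφkr]
    simp only [smul_neg, neg_add, add_zero, neg_smul, neg_neg, smul_add]
    abel
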